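/- Every absolutely separable two-qubit state belongs to ACVENN: if UσU† is separable for every 4×4 unitary U, then S(UσU†) − S((UσU†)_A) ≥ 0 for every 4×4 unitary U. -/

import Mathlib

open Matrix Finset
open scoped Kronecker ComplexOrder Classical

noncomputable section

/-- A quantum state: positive semidefinite matrix of trace 1. -/
def IsState {n : ℕ} (ρ : Matrix (Fin n) (Fin n) ℂ) : Prop :=
  ρ.PosSemidef ∧ ρ.trace = 1

/-- Von Neumann entropy `S(ρ) = -∑ᵢ λᵢ log₂ λᵢ` over the eigenvalues of `ρ`
(with the convention `0 · log₂ 0 = 0`, which holds since `Real.logb 2 0 = 0`). -/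
noncomputable def vnEntropy {n : ℕ} (ρ : Matrix (Fin n) (Fin n) ℂ) : ℝ :=
  if h : ρ.IsHermitian then -∑ i, h.eigenvalues i * Real.logb 2 (h.eigenvalues i) else 0

/-- Reduced state `ρ_A`: partial trace over the second tensor factor,
using the ordered product basis `|00⟩,|01⟩,|10⟩,|11⟩`, i.e. `|ab⟩ ↦ 2a+b`. -/
def ptraceB (ρ : Matrix (Fin 4) (Fin 4) ℂ) : Matrix (Fin 2) (Fin 2) ℂ :=
  Matrix.of fun i j => ∑ k : Fin 2,
    ρ ⟨2 * i.val + k.val, by omega⟩ ⟨2 * j.val + k.val, by omega⟩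

/-- Reduced state `ρ_B`: partial trace over the first tensor factor. -/
def ptraceA (ρ : Matrix (Fin 4) (Fin 4) ℂ) : Matrix (Fin 2) (Fin 2) ℂ :=
  Matrix.of fun i j => ∑ k : Fin 2,
    ρ ⟨2 * k.val + i.val, by omega⟩ ⟨2 * k.val + j.val, by omega⟩

/-- Conditional von Neumann entropy `S(A|B) = S(ρ_AB) - S(ρ_A)`. -/
def condEntropy (ρ : Matrix (Fin 4) (Fin 4) ℂ) : ℝ :=
  vnEntropy ρ - vnEntropy (ptraceB ρ)

/-- Rank-one projector `|v⟩⟨v|`. -/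
def proj (v : Fin 4 → ℂ) : Matrix (Fin 4) (Fin 4) ℂ := Matrix.vecMulVec v (star v)

/-- The Bell basis `|φ⁺⟩, |φ⁻⟩, |ψ⁺⟩, |ψ⁻⟩`. -/
noncomputable def bell : Fin 4 → Fin 4 → ℂ :=
  ![![(Real.sqrt 2 : ℂ)⁻¹, 0, 0, (Real.sqrt 2 : ℂ)⁻¹],
    ![(Real.sqrt 2 : ℂ)⁻¹, 0, 0, -(Real.sqrt 2 : ℂ)⁻¹],
    ![0, (Real.sqrt 2 : ℂ)⁻¹, (Real.sqrt 2 : ℂ)⁻¹, 0],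
    ![0, (Real.sqrt 2 : ℂ)⁻¹, -(Real.sqrt 2 : ℂ)⁻¹, 0]]

/-- Kronecker product of two one-qubit matrices as a `4 × 4` matrix,
with the index identification `(a,b) ↦ 2a+b`. -/
def kron (A B : Matrix (Fin 2) (Fin 2) ℂ) : Matrix (Fin 4) (Fin 4) ℂ :=
  Matrix.reindex finProdFinEquiv finProdFinEquiv (A ⊗ₖ B)

/-- A two-qubit state is separable if it is a convex combination of product states. -/
def Separable (σ : Matrix (Fin 4) (Fin 4) ℂ) : Prop :=
  ∃ (m : ℕ) (p : Fin m → ℝ) (α β : Fin m → Matrix (Fin 2) (Fin 2) ℂ),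
    (∀ i, 0 ≤ p i) ∧ (∑ i, p i = 1) ∧ (∀ i, IsState (α i)) ∧ (∀ i, IsState (β i)) ∧
    σ = ∑ i, (p i : ℂ) • kron (α i) (β i)


/-! ### Auxiliary lemmas -/

lemma sqrt2_mul_self : ((Real.sqrt 2 : ℝ) : ℂ) * ((Real.sqrt 2 : ℝ) : ℂ) = 2 := by
  norm_cast; exact Real.mul_self_sqrt (by norm_num)

lemma sqrt2_inv_mul : ((Real.sqrt 2 : ℂ))⁻¹ * ((Real.sqrt 2 : ℂ))⁻¹ = 2⁻¹ := by
  rw [← mul_inv, sqrt2_mul_self]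

lemma sqrt2_inv_sq : ((Real.sqrt 2 : ℂ))⁻¹ ^ 2 = 2⁻¹ := by
  rw [sq, sqrt2_inv_mul]

lemma star_sqrt2_inv : star ((Real.sqrt 2 : ℂ))⁻¹ = ((Real.sqrt 2 : ℂ))⁻¹ := by
  rw [star_inv₀]; congr 1; exact Complex.conj_ofReal _

/-- The matrix whose columns are the Bell vectors. -/
def Bmat : Matrix (Fin 4) (Fin 4) ℂ := Matrix.of fun i j => bell j i

lemma Bmat_unitary : Bmat ∈ Matrix.unitaryGroup (Fin 4) ℂ := by
  rw [Matrix.mem_unitaryGroup_iff']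
  ext i j
  fin_cases i <;> fin_cases j <;>
    simp [Bmat, bell, Matrix.mul_apply, Fin.sum_univ_four, Matrix.one_apply,
      star_sqrt2_inv, sqrt2_inv_mul] <;> norm_num

lemma star_Bmat_mul_Bmat : star Bmat * Bmat = 1 :=
  Matrix.mem_unitaryGroup_iff'.mp Bmat_unitary

/-- quadratic form -/
def qf (v : Fin 4 → ℂ) (M : Matrix (Fin 4) (Fin 4) ℂ) : ℂ := star v ⬝ᵥ M *ᵥ v

lemma conj_diag_entry (M : Matrix (Fin 4) (Fin 4) ℂ) (i : Fin 4) :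
    (star Bmat * M * Bmat) i i = qf (bell i) M := by
  simp only [qf, dotProduct, mulVec, Matrix.mul_apply, Finset.sum_mul, Finset.mul_sum]
  rw [Finset.sum_comm]
  refine Finset.sum_congr rfl fun k _ => Finset.sum_congr rfl fun l _ => ?_
  simp only [Matrix.star_apply, Bmat, Matrix.of_apply, Pi.star_apply]
  ring

lemma qf_bell0 (M : Matrix (Fin 4) (Fin 4) ℂ) :
    qf (bell 0) M = 2⁻¹ * (M 0 0 + M 0 3 + M 3 0 + M 3 3) := by
  simp [qf, dotProduct, mulVec, Fin.sum_univ_four, bell, star_sqrt2_inv, Matrix.vecHead,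
    Matrix.vecTail]
  ring_nf
  rw [sqrt2_inv_sq]
  ring

lemma qf_bell1 (M : Matrix (Fin 4) (Fin 4) ℂ) :
    qf (bell 1) M = 2⁻¹ * (M 0 0 - M 0 3 - M 3 0 + M 3 3) := by
  simp [qf, dotProduct, mulVec, Fin.sum_univ_four, bell, star_sqrt2_inv, Matrix.vecHead,
    Matrix.vecTail]
  ring_nf
  rw [sqrt2_inv_sq]
  ring

lemma qf_bell2 (M : Matrix (Fin 4) (Fin 4) ℂ) :
    qf (bell 2) M = 2⁻¹ * (M 1 1 + M 1 2 + M 2 1 + M 2 2) := by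
  simp [qf, dotProduct, mulVec, Fin.sum_univ_four, bell, star_sqrt2_inv, Matrix.vecHead,
    Matrix.vecTail]
  ring_nf
  rw [sqrt2_inv_sq]
  ring

lemma qf_bell3 (M : Matrix (Fin 4) (Fin 4) ℂ) :
    qf (bell 3) M = 2⁻¹ * (M 1 1 - M 1 2 - M 2 1 + M 2 2) := by
  simp [qf, dotProduct, mulVec, Fin.sum_univ_four, bell, star_sqrt2_inv, Matrix.vecHead,
    Matrix.vecTail]
  ring_nf
  rw [sqrt2_inv_sq]
  ring

lemma psd2_qform {A : Matrix (Fin 2) (Fin 2) ℂ} (hA : A.PosSemidef) (v : Fin 2 → ℂ) :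
    0 ≤ star (v 0) * (A 0 0 * v 0 + A 0 1 * v 1) + star (v 1) * (A 1 0 * v 0 + A 1 1 * v 1) := by
  have h := hA.dotProduct_mulVec_nonneg v
  simpa [dotProduct, mulVec, Fin.sum_univ_two] using h

lemma state2_diag_re {A : Matrix (Fin 2) (Fin 2) ℂ} (hA : A.PosSemidef) (i : Fin 2) :
    A i i = ((A i i).re : ℂ) ∧ 0 ≤ (A i i).re := by
  have h1 : ((A i i).re : ℂ) = A i i := by
    simpa using hA.1.coe_re_apply_self i
  have h2 := hA.dotProduct_mulVec_nonneg (Pi.single i 1)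
  have h3 : star (Pi.single i 1 : Fin 2 → ℂ) ⬝ᵥ A *ᵥ Pi.single i 1 = A i i := by
    fin_cases i <;> simp [dotProduct, mulVec, Fin.sum_univ_two, Pi.single_apply]
  rw [h3] at h2
  exact ⟨h1.symm, (Complex.nonneg_iff.mp h2).1⟩

lemma state2_trace_re {A : Matrix (Fin 2) (Fin 2) ℂ} (hA : IsState A) :
    (A 0 0).re + (A 1 1).re = 1 := by
  have h := hA.2
  rw [Matrix.trace_fin_two] at h
  have := congrArg Complex.re h
  simpa using this

lemma state2_herm10 {A : Matrix (Fin 2) (Fin 2) ℂ} (hA : A.PosSemidef) :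
    A 1 0 = star (A 0 1) := by
  have h := hA.1
  rw [Matrix.IsHermitian] at h
  conv_lhs => rw [← h]
  simp [Matrix.conjTranspose_apply]

lemma state2_offdiag {A : Matrix (Fin 2) (Fin 2) ℂ} (hA : IsState A) :
    (A 0 1).re ^ 2 + (A 0 1).im ^ 2 ≤ (A 0 0).re * (A 1 1).re := by
  obtain ⟨hpsd, htr⟩ := hA
  have h00 := (state2_diag_re hpsd 0)
  have h11 := (state2_diag_re hpsd 1)
  have him00 : (A 0 0).im = 0 := by rw [h00.1]; simp
  have him11 : (A 1 1).im = 0 := by rw [h11.1]; simp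
  have h10 := state2_herm10 hpsd
  have hre10 : (A 1 0).re = (A 0 1).re := by rw [h10]; simp [Complex.star_def]
  have him10 : (A 1 0).im = -(A 0 1).im := by rw [h10]; simp [Complex.star_def]
  have hsum : (A 0 0).re + (A 1 1).re = 1 := state2_trace_re ⟨hpsd, htr⟩
  have hv0 := (Complex.nonneg_iff.mp (psd2_qform hpsd ![A 0 1, -(A 0 0)])).1
  have hv1 := (Complex.nonneg_iff.mp (psd2_qform hpsd ![A 1 1, -(A 1 0)])).1
  simp only [Matrix.cons_val_zero, Matrix.cons_val_one, Matrix.head_cons, Complex.add_re,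
    Complex.mul_re, Complex.mul_im, Complex.add_im, Complex.neg_re, Complex.neg_im,
    Complex.star_def, Complex.conj_re, Complex.conj_im, hre10, him10, him00, him11] at hv0 hv1
  ring_nf at hv0 hv1 ⊢
  nlinarith [h00.2, h11.2, sq_nonneg ((A 0 1).re), sq_nonneg ((A 0 1).im)]

lemma cauchy_sq (ra ia rb ib : ℝ) : (ra*rb - ia*ib)^2 ≤ (ra^2+ia^2)*(rb^2+ib^2) := by
  nlinarith [sq_nonneg (ra*ib + ia*rb)]

lemma cauchy_sq' (ra ia rb ib : ℝ) : (ra*rb + ia*ib)^2 ≤ (ra^2+ia^2)*(rb^2+ib^2) := by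
  nlinarith [sq_nonneg (ra*ib - ia*rb)]

lemma prod_real_bound (a0 a1 b0 b1 : ℝ) (na nb : ℝ)
    (ha0 : 0 ≤ a0) (ha1 : 0 ≤ a1) (hb0 : 0 ≤ b0) (hb1 : 0 ≤ b1)
    (hA : a0 + a1 = 1) (hB : b0 + b1 = 1)
    (hna0 : 0 ≤ na) (hnb0 : 0 ≤ nb)
    (hna : na ≤ a0*a1) (hnb : nb ≤ b0*b1)
    (r : ℝ) (hr : r^2 ≤ na*nb) :
    a0*b0 + a1*b1 + 2*r ≤ 1 := by
  have h1 : r^2 ≤ (a0*a1)*(b0*b1) :=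
    le_trans hr (mul_le_mul hna hnb hnb0 (le_trans hna0 hna))
  have h2 : 4*r^2 ≤ (a0*b1 + a1*b0)^2 := by nlinarith [sq_nonneg (a0*b1 - a1*b0)]
  have h3 : 2*r ≤ a0*b1 + a1*b0 := by
    rcases le_or_gt r 0 with h | h
    · nlinarith [mul_nonneg ha0 hb1, mul_nonneg ha1 hb0]
    · nlinarith [mul_nonneg ha0 hb1, mul_nonneg ha1 hb0]
  nlinarith

lemma kron00 (A B : Matrix (Fin 2) (Fin 2) ℂ) : kron A B 0 0 = A 0 0 * B 0 0 := by
  simp [kron, finProdFinEquiv]; rfl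
lemma kron03 (A B : Matrix (Fin 2) (Fin 2) ℂ) : kron A B 0 3 = A 0 1 * B 0 1 := by
  simp [kron, finProdFinEquiv]; rfl
lemma kron30 (A B : Matrix (Fin 2) (Fin 2) ℂ) : kron A B 3 0 = A 1 0 * B 1 0 := by
  simp [kron, finProdFinEquiv]; rfl
lemma kron33 (A B : Matrix (Fin 2) (Fin 2) ℂ) : kron A B 3 3 = A 1 1 * B 1 1 := by
  simp [kron, finProdFinEquiv]; rfl
lemma kron11 (A B : Matrix (Fin 2) (Fin 2) ℂ) : kron A B 1 1 = A 0 0 * B 1 1 := by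
  simp [kron, finProdFinEquiv]; rfl
lemma kron12 (A B : Matrix (Fin 2) (Fin 2) ℂ) : kron A B 1 2 = A 0 1 * B 1 0 := by
  simp [kron, finProdFinEquiv]; rfl
lemma kron21 (A B : Matrix (Fin 2) (Fin 2) ℂ) : kron A B 2 1 = A 1 0 * B 0 1 := by
  simp [kron, finProdFinEquiv]; rfl
lemma kron22 (A B : Matrix (Fin 2) (Fin 2) ℂ) : kron A B 2 2 = A 1 1 * B 0 0 := by
  simp [kron, finProdFinEquiv]; rfl

lemma prod_bound {A B : Matrix (Fin 2) (Fin 2) ℂ} (hA : IsState A) (hB : IsState B) (i : Fin 4) :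
    (qf (bell i) (kron A B)).re ≤ 1/2 := by
  have ha0 := (state2_diag_re hA.1 0).2
  have ha1 := (state2_diag_re hA.1 1).2
  have hb0 := (state2_diag_re hB.1 0).2
  have hb1 := (state2_diag_re hB.1 1).2
  have haim0 : (A 0 0).im = 0 := by rw [(state2_diag_re hA.1 0).1]; simp
  have haim1 : (A 1 1).im = 0 := by rw [(state2_diag_re hA.1 1).1]; simp
  have hbim0 : (B 0 0).im = 0 := by rw [(state2_diag_re hB.1 0).1]; simp
  have hbim1 : (B 1 1).im = 0 := by rw [(state2_diag_re hB.1 1).1]; simp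
  have hasum := state2_trace_re hA
  have hbsum := state2_trace_re hB
  have hoffA := state2_offdiag hA
  have hoffB := state2_offdiag hB
  have ha10 := state2_herm10 hA.1
  have hb10 := state2_herm10 hB.1
  have hare10 : (A 1 0).re = (A 0 1).re := by rw [ha10]; simp [Complex.star_def]
  have haim10 : (A 1 0).im = -(A 0 1).im := by rw [ha10]; simp [Complex.star_def]
  have hbre10 : (B 1 0).re = (B 0 1).re := by rw [hb10]; simp [Complex.star_def]
  have hbim10 : (B 1 0).im = -(B 0 1).im := by rw [hb10]; simp [Complex.star_def]
  have hna0 : (0:ℝ) ≤ (A 0 1).re^2 + (A 0 1).im^2 := by positivity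
  have hnb0 : (0:ℝ) ≤ (B 0 1).re^2 + (B 0 1).im^2 := by positivity
  fin_cases i
  · show (qf (bell 0) (kron A B)).re ≤ 1/2
    rw [qf_bell0, kron00, kron03, kron30, kron33]
    simp only [Complex.mul_re, Complex.add_re, Complex.add_im, Complex.mul_im,
      haim0, haim1, hbim0, hbim1, hare10, haim10, hbre10, hbim10, Complex.inv_re,
      Complex.inv_im, Complex.normSq_ofNat, Complex.re_ofNat, Complex.im_ofNat]
    ring_nf
    have := prod_real_bound ((A 0 0).re) ((A 1 1).re) ((B 0 0).re) ((B 1 1).re)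
      _ _ ha0 ha1 hb0 hb1 hasum hbsum hna0 hnb0 hoffA hoffB
      ((A 0 1).re * (B 0 1).re - (A 0 1).im * (B 0 1).im)
      (cauchy_sq _ _ _ _)
    linarith
  · show (qf (bell 1) (kron A B)).re ≤ 1/2
    rw [qf_bell1, kron00, kron03, kron30, kron33]
    simp only [Complex.mul_re, Complex.add_re, Complex.add_im, Complex.mul_im, Complex.sub_re,
      Complex.sub_im, haim0, haim1, hbim0, hbim1, hare10, haim10, hbre10, hbim10, Complex.inv_re,
      Complex.inv_im, Complex.normSq_ofNat, Complex.re_ofNat, Complex.im_ofNat]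
    ring_nf
    have := prod_real_bound ((A 0 0).re) ((A 1 1).re) ((B 0 0).re) ((B 1 1).re)
      _ _ ha0 ha1 hb0 hb1 hasum hbsum hna0 hnb0 hoffA hoffB
      (-((A 0 1).re * (B 0 1).re - (A 0 1).im * (B 0 1).im))
      (by rw [neg_pow]; simpa using cauchy_sq (A 0 1).re (A 0 1).im (B 0 1).re (B 0 1).im)
    linarith
  · show (qf (bell 2) (kron A B)).re ≤ 1/2
    rw [qf_bell2, kron11, kron12, kron21, kron22]
    simp only [Complex.mul_re, Complex.add_re, Complex.add_im, Complex.mul_im,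
      haim0, haim1, hbim0, hbim1, hare10, haim10, hbre10, hbim10, Complex.inv_re,
      Complex.inv_im, Complex.normSq_ofNat, Complex.re_ofNat, Complex.im_ofNat]
    ring_nf
    have := prod_real_bound ((A 0 0).re) ((A 1 1).re) ((B 1 1).re) ((B 0 0).re)
      _ _ ha0 ha1 hb1 hb0 hasum (by linarith) hna0 hnb0 hoffA (by linarith [hoffB])
      ((A 0 1).re * (B 0 1).re + (A 0 1).im * (B 0 1).im)
      (cauchy_sq' _ _ _ _)
    linarith
  · show (qf (bell 3) (kron A B)).re ≤ 1/2
    rw [qf_bell3, kron11, kron12, kron21, kron22]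
    simp only [Complex.mul_re, Complex.add_re, Complex.add_im, Complex.mul_im, Complex.sub_re,
      Complex.sub_im, haim0, haim1, hbim0, hbim1, hare10, haim10, hbre10, hbim10, Complex.inv_re,
      Complex.inv_im, Complex.normSq_ofNat, Complex.re_ofNat, Complex.im_ofNat]
    ring_nf
    have := prod_real_bound ((A 0 0).re) ((A 1 1).re) ((B 1 1).re) ((B 0 0).re)
      _ _ ha0 ha1 hb1 hb0 hasum (by linarith) hna0 hnb0 hoffA (by linarith [hoffB])
      (-((A 0 1).re * (B 0 1).re + (A 0 1).im * (B 0 1).im))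
      (by rw [neg_pow]; simpa using cauchy_sq' (A 0 1).re (A 0 1).im (B 0 1).re (B 0 1).im)
    linarith

lemma sep_diag_bound {τ : Matrix (Fin 4) (Fin 4) ℂ} (h : Separable τ) (i : Fin 4) :
    ((star Bmat * τ * Bmat) i i).re ≤ 1/2 := by
  obtain ⟨m, p, α, β, hp, hps, hα, hβ, hτ⟩ := h
  rw [hτ, Matrix.mul_sum, Matrix.sum_mul]
  simp only [Matrix.mul_smul, Matrix.smul_mul, Matrix.sum_apply, Matrix.smul_apply,
    smul_eq_mul]
  rw [Complex.re_sum]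
  have hb : ∀ j, ((star Bmat * kron (α j) (β j) * Bmat) i i).re ≤ 1/2 := fun j => by
    rw [conj_diag_entry]; exact prod_bound (hα j) (hβ j) i
  calc ∑ j, ((p j : ℂ) * (star Bmat * kron (α j) (β j) * Bmat) i i).re
      = ∑ j, p j * ((star Bmat * kron (α j) (β j) * Bmat) i i).re := by
        exact Finset.sum_congr rfl fun j _ => Complex.re_ofReal_mul _ _
    _ ≤ ∑ j, p j * (1/2) :=
        Finset.sum_le_sum fun j _ => mul_le_mul_of_nonneg_left (hb j) (hp j)
    _ = 1/2 := by rw [← Finset.sum_mul, hps]; ring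

lemma sum_eigs {n : ℕ} {A : Matrix (Fin n) (Fin n) ℂ} (hA : A.IsHermitian) :
    ∑ i, hA.eigenvalues i = A.trace.re := by
  have h : A.trace = ∑ i, (hA.eigenvalues i : ℂ) := by
    conv_lhs => rw [hA.spectral_theorem]
    rw [Unitary.conjStarAlgAut_apply, Matrix.trace_mul_cycle,
      (Unitary.mem_iff.mp (Matrix.IsHermitian.eigenvectorUnitary hA).2).1, one_mul,
      Matrix.trace_diagonal]
    rfl
  rw [h]
  simp

lemma vn_ge_one {ρ : Matrix (Fin 4) (Fin 4) ℂ} (hpsd : ρ.PosSemidef) (htr : ρ.trace = 1)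
    (hhalf : ∀ i, hpsd.1.eigenvalues i ≤ 1/2) : 1 ≤ vnEntropy ρ := by
  rw [vnEntropy, dif_pos hpsd.1]
  have hsum : ∑ i, hpsd.1.eigenvalues i = 1 := by
    rw [sum_eigs hpsd.1, htr]; simp
  have hterm : ∀ i : Fin 4, hpsd.1.eigenvalues i ≤
      -(hpsd.1.eigenvalues i * Real.logb 2 (hpsd.1.eigenvalues i)) := by
    intro i
    set x := hpsd.1.eigenvalues i with hx
    rcases eq_or_lt_of_le (hpsd.eigenvalues_nonneg i) with h | h
    · have h0 : x = 0 := by rw [hx, ← h]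
      rw [h0]; simp
    · have hlog : Real.logb 2 x ≤ -1 := by
        have h2 : Real.logb 2 x ≤ Real.logb 2 (1/2) :=
          Real.logb_le_logb_of_le (by norm_num) h (hhalf i)
        have : Real.logb 2 (1/2) = -1 := by
          rw [show (1/2 : ℝ) = 2⁻¹ by norm_num, Real.logb_inv,
            Real.logb_self_eq_one (by norm_num)]
        linarith
      nlinarith
  calc (1:ℝ) = ∑ i, hpsd.1.eigenvalues i := hsum.symm
    _ ≤ ∑ i, -(hpsd.1.eigenvalues i * Real.logb 2 (hpsd.1.eigenvalues i)) :=
        Finset.sum_le_sum fun i _ => hterm i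
    _ = -∑ i, hpsd.1.eigenvalues i * Real.logb 2 (hpsd.1.eigenvalues i) := by
        rw [Finset.sum_neg_distrib]

lemma xlogx_key : ∀ t : ℝ, 0 ≤ t → t - 1/2 - t * Real.log 2 ≤ t * Real.log t := by
  intro t ht
  rcases eq_or_lt_of_le ht with h | h
  · rw [← h]; norm_num
  · have hlog2t : 1 - (2*t)⁻¹ ≤ Real.log (2*t) := by
      have h1 : Real.log (2*t)⁻¹ ≤ (2*t)⁻¹ - 1 :=
        Real.log_le_sub_one_of_pos (by positivity)
      rw [Real.log_inv] at h1
      linarith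
    have hsplit : Real.log (2*t) = Real.log 2 + Real.log t :=
      Real.log_mul (by norm_num) (ne_of_gt h)
    have h2 : t * (1 - (2*t)⁻¹) ≤ t * Real.log (2*t) :=
      mul_le_mul_of_nonneg_left hlog2t ht
    have h3 : t * (1 - (2*t)⁻¹) = t - 1/2 := by
      field_simp
    rw [h3, hsplit, mul_add] at h2
    linarith

lemma binEnt_le_one (x y : ℝ) (hx : 0 ≤ x) (hy : 0 ≤ y) (hxy : x + y = 1) :
    -(x * Real.logb 2 x + y * Real.logb 2 y) ≤ 1 := by
  have hl2 : 0 < Real.log 2 := Real.log_pos (by norm_num)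
  have kx := xlogx_key x hx
  have ky := xlogx_key y hy
  have hS : -(Real.log 2) ≤ x * Real.log x + y * Real.log y := by nlinarith
  rw [Real.logb, Real.logb]
  have hexp : x * (Real.log x / Real.log 2) + y * (Real.log y / Real.log 2)
      = (x * Real.log x + y * Real.log y) / Real.log 2 := by ring
  rw [hexp, ← neg_div, div_le_one hl2]
  linarith

lemma vn2_le_one {A : Matrix (Fin 2) (Fin 2) ℂ} (hpsd : A.PosSemidef) (htr : A.trace = 1) :
    vnEntropy A ≤ 1 := by
  rw [vnEntropy, dif_pos hpsd.1]
  have hsum : ∑ i, hpsd.1.eigenvalues i = 1 := by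
    rw [sum_eigs hpsd.1, htr]; simp
  rw [Fin.sum_univ_two] at hsum ⊢
  exact binEnt_le_one _ _ (hpsd.eigenvalues_nonneg 0) (hpsd.eigenvalues_nonneg 1) hsum

lemma ptraceB_eq (ρ : Matrix (Fin 4) (Fin 4) ℂ) :
    ptraceB ρ = !![ρ 0 0 + ρ 1 1, ρ 0 2 + ρ 1 3; ρ 2 0 + ρ 3 1, ρ 2 2 + ρ 3 3] := by
  ext i j
  fin_cases i <;> fin_cases j <;> simp [ptraceB, Fin.sum_univ_two]

lemma ptraceB_psd {ρ : Matrix (Fin 4) (Fin 4) ℂ} (hpsd : ρ.PosSemidef) :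
    (ptraceB ρ).PosSemidef := by
  rw [ptraceB_eq]
  have hconj : ∀ a b, star (ρ a b) = ρ b a := by
    intro a b
    conv_rhs => rw [← hpsd.1]
    simp [Matrix.conjTranspose_apply]
  refine Matrix.PosSemidef.of_dotProduct_mulVec_nonneg ?_ ?_
  · ext i j
    fin_cases i <;> fin_cases j <;>
      simp [Matrix.conjTranspose_apply, hconj]
  · intro v
    have key : star v ⬝ᵥ !![ρ 0 0 + ρ 1 1, ρ 0 2 + ρ 1 3; ρ 2 0 + ρ 3 1, ρ 2 2 + ρ 3 3] *ᵥ v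
        = star (![v 0, 0, v 1, 0]) ⬝ᵥ ρ *ᵥ ![v 0, 0, v 1, 0]
          + star (![0, v 0, 0, v 1]) ⬝ᵥ ρ *ᵥ ![0, v 0, 0, v 1] := by
      simp [dotProduct, mulVec, Fin.sum_univ_two, Fin.sum_univ_four]
      ring
    rw [key]
    exact add_nonneg (hpsd.dotProduct_mulVec_nonneg _) (hpsd.dotProduct_mulVec_nonneg _)

lemma ptraceB_trace {ρ : Matrix (Fin 4) (Fin 4) ℂ} (htr : ρ.trace = 1) :
    (ptraceB ρ).trace = 1 := by
  rw [ptraceB_eq, Matrix.trace_fin_two, ← htr, Matrix.trace]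
  simp [Matrix.diag, Fin.sum_univ_four]
  ring

/-- Every absolutely separable two-qubit state belongs to ACVENN. -/
theorem stmt_6 (σ : Matrix (Fin 4) (Fin 4) ℂ) (hσ : IsState σ)
    (habs : ∀ U ∈ Matrix.unitaryGroup (Fin 4) ℂ, Separable (U * σ * Uᴴ)) :
    ∀ U ∈ Matrix.unitaryGroup (Fin 4) ℂ, 0 ≤ condEntropy (U * σ * Uᴴ) := by
  intro U hU
  have hUs : Uᴴ * U = 1 := by
    rw [← Matrix.star_eq_conjTranspose]; exact (Unitary.mem_iff.mp hU).1
  have hpsd' : (U * σ * Uᴴ).PosSemidef := hσ.1.mul_mul_conjTranspose_same U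
  have htr' : (U * σ * Uᴴ).trace = 1 := by
    rw [Matrix.trace_mul_cycle, hUs, one_mul, hσ.2]
  have hherm := hpsd'.1
  have hPmem : (Matrix.IsHermitian.eigenvectorUnitary hherm : Matrix (Fin 4) (Fin 4) ℂ)
      ∈ Matrix.unitaryGroup (Fin 4) ℂ := (Matrix.IsHermitian.eigenvectorUnitary hherm).2
  set P : Matrix (Fin 4) (Fin 4) ℂ :=
    (Matrix.IsHermitian.eigenvectorUnitary hherm : Matrix (Fin 4) (Fin 4) ℂ) with hP
  set M := Bmat * (star P) * U with hM
  have hMmem : M ∈ Matrix.unitaryGroup (Fin 4) ℂ :=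
    mul_mem (mul_mem Bmat_unitary (Unitary.star_mem hPmem)) hU
  have hsep := habs M hMmem
  have hdiag : star Bmat * (M * σ * Mᴴ) * Bmat
      = Matrix.diagonal (RCLike.ofReal ∘ hherm.eigenvalues) := by
    have hPP : star P * P = 1 := (Unitary.mem_iff.mp hPmem).1
    have hMH : Mᴴ = star U * (P * star Bmat) := by
      rw [← Matrix.star_eq_conjTranspose, hM]
      simp [StarMul.star_mul, Matrix.mul_assoc]
    rw [hMH, hM]
    have e1 : star Bmat * (Bmat * star P * U * σ * (star U * (P * star Bmat))) * Bmat
        = (star Bmat * Bmat) * (star P * (U * σ * star U) * P) * (star Bmat * Bmat) := by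
      simp only [Matrix.mul_assoc]
    rw [e1, star_Bmat_mul_Bmat, one_mul, mul_one]
    have hUσ : U * σ * star U = U * σ * Uᴴ := by
      rw [Matrix.star_eq_conjTranspose]
    rw [hUσ, hP]
    rw [← hherm.conjStarAlgAut_star_eigenvectorUnitary, Unitary.conjStarAlgAut_apply,
      Unitary.coe_star, star_star]
  have heig : ∀ i, hherm.eigenvalues i ≤ 1/2 := by
    intro i
    have h1 := sep_diag_bound hsep i
    rw [hdiag] at h1
    simpa [Matrix.diagonal_apply_eq, Function.comp] using h1
  have h1 : 1 ≤ vnEntropy (U * σ * Uᴴ) := vn_ge_one hpsd' htr' heig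
  have h2 : vnEntropy (ptraceB (U * σ * Uᴴ)) ≤ 1 :=
    vn2_le_one (ptraceB_psd hpsd') (ptraceB_trace htr')
  rw [condEntropy]
  linarith
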